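/- Let M be a compact metric space and {Ψ_i}_{i≥1} a countable family of continuous functions from M to [0,1] that is dense in C(M,[0,1]). Define d(μ,ν) := Σ_{i≥1} 2^{-i} |∫Ψ_i dμ − ∫Ψ_i dν| for Borel probability measures μ, ν on M. Then for every ε > 0 there exists q ≥ 1 such that: if μ and ν are Borel probability measures on M whose supports are both contained in a union ∪_{j=1}^m I_j of pairwise disjoint closed connected sets, with diam(I_j) ≤ 1/q for each j, and |ν(I_j) − μ(I_j)| ≤ 1/(qm) for each j, then d(μ,ν) < ε. -/

import Mathlib

open MeasureTheory Filter Topology Metric Set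

/-- The explicit metric `d` on measures induced by a countable family of test functions. -/
noncomputable def wd {M : Type*} [MetricSpace M] [MeasurableSpace M]
    (Ψ : ℕ → M → ℝ) (μ ν : Measure M) : ℝ :=
  ∑' i : ℕ, (1 / 2 : ℝ) ^ (i + 1) * |(∫ x, Ψ i x ∂μ) - ∫ x, Ψ i x ∂ν|

theorem stmt0 {M : Type*} [MetricSpace M] [CompactSpace M]
    [MeasurableSpace M] [BorelSpace M]
    (Ψ : ℕ → M → ℝ)
    (hΨc : ∀ i, Continuous (Ψ i))
    (hΨ01 : ∀ i x, Ψ i x ∈ Set.Icc (0 : ℝ) 1)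
    (hdense : ∀ g : M → ℝ, Continuous g → (∀ x, g x ∈ Set.Icc (0 : ℝ) 1) →
      ∀ ε > (0 : ℝ), ∃ i, ∀ x, |g x - Ψ i x| ≤ ε) :
    ∀ ε > (0 : ℝ), ∃ q : ℕ, 1 ≤ q ∧
      ∀ (μ ν : Measure M), IsProbabilityMeasure μ → IsProbabilityMeasure ν →
      ∀ (m : ℕ) (I : Fin m → Set M),
        (∀ j, IsClosed (I j)) → (∀ j, IsConnected (I j)) →
        (∀ j k, j ≠ k → Disjoint (I j) (I k)) →
        (∀ j, diam (I j) ≤ 1 / q) →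
        μ (⋃ j, I j) = 1 → ν (⋃ j, I j) = 1 →
        (∀ j, |(ν (I j)).toReal - (μ (I j)).toReal| ≤ 1 / (q * m)) →
        wd Ψ μ ν < ε := by
  intro ε hε
  -- choose N with (1/2)^N < ε/2
  obtain ⟨N0, hN0⟩ := exists_pow_lt_of_lt_one (half_pos hε) (by norm_num : (1/2:ℝ) < 1)
  set N : ℕ := N0 + 1 with hNdef
  have hN : (1/2:ℝ)^N < ε/2 := by
    have : (1/2:ℝ)^N ≤ (1/2:ℝ)^N0 :=
      pow_le_pow_of_le_one (by norm_num) (by norm_num) (Nat.le_succ _)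
    exact this.trans_lt hN0
  -- uniform continuity moduli
  have hδex : ∀ i, ∃ δ > (0:ℝ), ∀ x y : M, dist x y < δ → |Ψ i x - Ψ i y| < ε/8 := by
    intro i
    have hu : UniformContinuous (Ψ i) :=
      CompactSpace.uniformContinuous_of_continuous (hΨc i)
    rcases Metric.uniformContinuous_iff.mp hu (ε/8) (by positivity) with ⟨δ, hδ0, h⟩
    exact ⟨δ, hδ0, fun x y hxy => by simpa [Real.dist_eq] using h hxy⟩
  choose δ hδ0 hδ using hδex
  have hne : (Finset.range N).Nonempty := ⟨0, by simp [hNdef]⟩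
  set δm : ℝ := min (ε/4) ((Finset.range N).inf' hne δ) with hδm
  have hδm0 : 0 < δm := lt_min (by positivity)
    (by rw [Finset.lt_inf'_iff]; exact fun i _ => hδ0 i)
  obtain ⟨n, hn⟩ := exists_nat_one_div_lt hδm0
  refine ⟨n+1, Nat.succ_le_succ (Nat.zero_le _), ?_⟩
  set q : ℕ := n + 1 with hqdef
  have hq0 : (0:ℝ) < q := by positivity
  have hq1 : (1:ℝ)/q < δm := by
    have : ((q:ℝ)) = (n:ℝ) + 1 := by push_cast [hqdef]; ring
    rw [this]; exact hn
  have hq4 : (1:ℝ)/q < ε/4 := hq1.trans_le (min_le_left _ _)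
  have hqδ : ∀ i < N, (1:ℝ)/q < δ i := by
    intro i hi
    exact hq1.trans_le ((min_le_right _ _).trans
      (Finset.inf'_le δ (Finset.mem_range.mpr hi)))
  intro μ ν hμ hν m I hIc hIconn hIdis hIdiam hμ1 hν1 hnear
  -- m positive
  rcases Nat.eq_zero_or_pos m with hm | hm
  · exfalso; subst hm
    rw [iUnion_of_empty, measure_empty] at hμ1
    exact zero_ne_one hμ1
  have hms : ∀ j, MeasurableSet (I j) := fun j => (hIc j).measurableSet
  have hpd : Pairwise (Function.onFun Disjoint I) := fun j k h => hIdis j k h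
  choose x hx using fun j => (hIconn j).nonempty
  have hint : ∀ i (ρ : Measure M), IsProbabilityMeasure ρ → Integrable (Ψ i) ρ := by
    intro i ρ hρ
    exact (hΨc i).integrable_of_hasCompactSupport (HasCompactSupport.of_compactSpace _)
  -- measures of the pieces sum to 1
  have hsum : ∀ (ρ : Measure M), IsProbabilityMeasure ρ → ρ (⋃ j, I j) = 1 →
      ∑ j, (ρ (I j)).toReal = 1 := by
    intro ρ hρ hρ1
    have h1 : ρ (⋃ j, I j) = ∑' j, ρ (I j) := measure_iUnion hpd hms
    rw [hρ1, tsum_fintype] at h1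
    have h2 := congrArg ENNReal.toReal h1
    rw [ENNReal.toReal_one, ENNReal.toReal_sum (fun j _ => measure_ne_top ρ _)] at h2
    exact h2.symm
  -- integral decomposition
  have hdecomp : ∀ i (ρ : Measure M), IsProbabilityMeasure ρ → ρ (⋃ j, I j) = 1 →
      ∫ y, Ψ i y ∂ρ = ∑ j, ∫ y in I j, Ψ i y ∂ρ := by
    intro i ρ hρ hρ1
    have hres : ρ.restrict (⋃ j, I j) = ρ := by
      apply Measure.restrict_eq_self_of_ae_mem
      have hc : ρ (⋃ j, I j)ᶜ = 0 := by
        rw [measure_compl (MeasurableSet.iUnion hms) (measure_ne_top _ _), hρ1,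
          measure_univ, tsub_self]
      have hceq : {a | ¬ a ∈ ⋃ j, I j} = (⋃ j, I j)ᶜ := rfl
      rw [ae_iff, hceq]
      exact hc
    calc ∫ y, Ψ i y ∂ρ = ∫ y in ⋃ j, I j, Ψ i y ∂ρ := by rw [hres]
      _ = ∑' j, ∫ y in I j, Ψ i y ∂ρ :=
          integral_iUnion hms hpd (hint i ρ hρ).integrableOn
      _ = ∑ j, ∫ y in I j, Ψ i y ∂ρ := tsum_fintype _
  -- key bound for i < N
  have key : ∀ i < N, |(∫ y, Ψ i y ∂μ) - ∫ y, Ψ i y ∂ν| ≤ ε/2 := by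
    intro i hi
    have hvar : ∀ (ρ : Measure M), IsProbabilityMeasure ρ → ∀ j,
        |(∫ y in I j, Ψ i y ∂ρ) - Ψ i (x j) * (ρ (I j)).toReal|
          ≤ ε/8 * (ρ (I j)).toReal := by
      intro ρ hρ j
      have h1 : (∫ y in I j, Ψ i y ∂ρ) - Ψ i (x j) * (ρ (I j)).toReal
          = ∫ y in I j, (Ψ i y - Ψ i (x j)) ∂ρ := by
        rw [integral_sub (hint i ρ hρ).integrableOn
          (integrableOn_const (measure_ne_top _ _)), setIntegral_const,
          smul_eq_mul, Measure.real]
        ring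
      rw [h1]
      have := norm_setIntegral_le_of_norm_le_const (measure_lt_top ρ (I j))
        (C := ε/8) (f := fun y => Ψ i y - Ψ i (x j)) ?_
      · simpa [Real.norm_eq_abs, Measure.real] using this
      · intro y hy
        have hd1 : dist y (x j) ≤ diam (I j) := dist_le_diam_of_mem
          (IsCompact.isBounded ((hIc j).isCompact)) hy (hx j)
        have hd2 : dist y (x j) < δ i := lt_of_le_of_lt (hd1.trans (hIdiam j)) (hqδ i hi)
        have := hδ i y (x j) hd2
        rw [Real.norm_eq_abs]
        exact this.le
    have hj : ∀ j, |(∫ y in I j, Ψ i y ∂μ) - ∫ y in I j, Ψ i y ∂ν|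
        ≤ ε/8 * (μ (I j)).toReal + ε/8 * (ν (I j)).toReal + 1/(q*m) := by
      intro j
      have h2 := hvar μ hμ j
      have h3 := hvar ν hν j
      have h4 : |Ψ i (x j) * (μ (I j)).toReal - Ψ i (x j) * (ν (I j)).toReal|
          ≤ 1/(q*m) := by
        rw [← mul_sub, abs_mul]
        have hb := hΨ01 i (x j)
        have habs : |Ψ i (x j)| ≤ 1 := abs_le.mpr ⟨by linarith [hb.1], hb.2⟩
        calc |Ψ i (x j)| * |(μ (I j)).toReal - (ν (I j)).toReal|
            ≤ 1 * (1/((q:ℝ)*m)) := by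
              apply mul_le_mul habs ?_ (abs_nonneg _) zero_le_one
              rw [abs_sub_comm]
              exact hnear j
          _ = 1/((q:ℝ)*m) := one_mul _
      have heq : (∫ y in I j, Ψ i y ∂μ) - ∫ y in I j, Ψ i y ∂ν
          = ((∫ y in I j, Ψ i y ∂μ) - Ψ i (x j) * (μ (I j)).toReal)
            + (Ψ i (x j) * (μ (I j)).toReal - Ψ i (x j) * (ν (I j)).toReal)
            + (Ψ i (x j) * (ν (I j)).toReal - ∫ y in I j, Ψ i y ∂ν) := by ring
      rw [heq]
      have h3' : |Ψ i (x j) * (ν (I j)).toReal - ∫ y in I j, Ψ i y ∂ν|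
          ≤ ε/8 * (ν (I j)).toReal := by rw [abs_sub_comm]; exact h3
      calc |_ + _ + _| ≤ _ := abs_add_three _ _ _
        _ ≤ ε/8 * (μ (I j)).toReal + ε/8 * (ν (I j)).toReal + 1/(q*m) := by
            linarith
    have hμs := hsum μ hμ hμ1
    have hνs := hsum ν hν hν1
    rw [hdecomp i μ hμ hμ1, hdecomp i ν hν hν1, ← Finset.sum_sub_distrib]
    refine (Finset.abs_sum_le_sum_abs _ _).trans ?_
    have hle : ∑ j, |(∫ y in I j, Ψ i y ∂μ) - ∫ y in I j, Ψ i y ∂ν|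
        ≤ ∑ j : Fin m, (ε/8 * (μ (I j)).toReal + ε/8 * (ν (I j)).toReal + 1/(q*m)) :=
      Finset.sum_le_sum (fun j _ => hj j)
    refine hle.trans ?_
    rw [Finset.sum_add_distrib, Finset.sum_add_distrib, ← Finset.mul_sum, ← Finset.mul_sum,
      hμs, hνs, Finset.sum_const, Finset.card_univ, Fintype.card_fin, nsmul_eq_mul]
    have hm' : (0:ℝ) < m := by exact_mod_cast hm
    have hmm : (m:ℝ) * (1/((q:ℝ)*m)) = 1/q := by field_simp
    rw [hmm]
    linarith
  -- now the tsum estimates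
  set f : ℕ → ℝ := fun i => (1/2:ℝ)^(i+1) * |(∫ y, Ψ i y ∂μ) - ∫ y, Ψ i y ∂ν| with hfdef
  have habs1 : ∀ i, |(∫ y, Ψ i y ∂μ) - ∫ y, Ψ i y ∂ν| ≤ 1 := by
    intro i
    have hb : ∀ (ρ : Measure M), IsProbabilityMeasure ρ →
        (0 ≤ ∫ y, Ψ i y ∂ρ) ∧ (∫ y, Ψ i y ∂ρ) ≤ 1 := by
      intro ρ hρ
      refine ⟨integral_nonneg (fun y => (hΨ01 i y).1), ?_⟩
      calc ∫ y, Ψ i y ∂ρ ≤ ∫ _, (1:ℝ) ∂ρ :=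
            integral_mono (hint i ρ hρ) (integrable_const _) (fun y => (hΨ01 i y).2)
        _ = 1 := by simp
    have h1 := hb μ hμ
    have h2 := hb ν hν
    rw [abs_le]
    constructor <;> linarith [h1.1, h1.2, h2.1, h2.2]
  have hf0 : ∀ i, 0 ≤ f i := fun i => mul_nonneg (by positivity) (abs_nonneg _)
  have hfle : ∀ i, f i ≤ (1/2:ℝ)^(i+1) :=
    fun i => mul_le_of_le_one_right (by positivity) (habs1 i)
  have hgs : Summable (fun i : ℕ => (1/2:ℝ)^(i+1)) := by
    simp_rw [pow_succ]
    exact (summable_geometric_of_lt_one (by norm_num) (by norm_num)).mul_right _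
  have hfs : Summable f := Summable.of_nonneg_of_le hf0 hfle hgs
  have ht : ∑' i : ℕ, (1/2:ℝ)^(i+1) = 1 := by
    simp_rw [pow_succ]
    rw [tsum_mul_right, tsum_geometric_of_lt_one (by norm_num) (by norm_num)]
    norm_num
  have hhead : ∑ i ∈ Finset.range N, f i ≤ ε/2 := by
    calc ∑ i ∈ Finset.range N, f i
        ≤ ∑ i ∈ Finset.range N, (1/2:ℝ)^(i+1) * (ε/2) := by
          refine Finset.sum_le_sum (fun i hi => ?_)
          exact mul_le_mul_of_nonneg_left (key i (Finset.mem_range.mp hi)) (by positivity)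
      _ = (∑ i ∈ Finset.range N, (1/2:ℝ)^(i+1)) * (ε/2) := by rw [← Finset.sum_mul]
      _ ≤ 1 * (ε/2) := by
          apply mul_le_mul_of_nonneg_right ?_ (le_of_lt (half_pos hε))
          calc ∑ i ∈ Finset.range N, (1/2:ℝ)^(i+1)
              ≤ ∑' i : ℕ, (1/2:ℝ)^(i+1) :=
                Summable.sum_le_tsum _ (fun i _ => by positivity) hgs
            _ = 1 := ht
      _ = ε/2 := one_mul _
  have htail : ∑' i : ℕ, f (i + N) < ε/2 := by
    have heq : ∀ i : ℕ, (1/2:ℝ)^(i + N + 1) = (1/2:ℝ)^N * (1/2:ℝ)^(i+1) := by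
      intro i; ring
    have hgsN : Summable (fun i : ℕ => (1/2:ℝ)^(i + N + 1)) :=
      (summable_congr heq).mpr (hgs.mul_left _)
    have hfsN : Summable (fun i : ℕ => f (i + N)) :=
      Summable.of_nonneg_of_le (fun i => hf0 _) (fun i => hfle _) hgsN
    have h1 : ∑' i : ℕ, f (i + N) ≤ ∑' i : ℕ, (1/2:ℝ)^(i + N + 1) :=
      Summable.tsum_le_tsum (fun i => hfle (i + N)) hfsN hgsN
    have h2 : ∑' i : ℕ, (1/2:ℝ)^(i + N + 1) = (1/2:ℝ)^N := by
      rw [tsum_congr heq, tsum_mul_left, ht, mul_one]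
    exact lt_of_le_of_lt (h1.trans (le_of_eq h2)) hN
  have hw : wd Ψ μ ν = ∑' i, f i := rfl
  rw [hw, ← Summable.sum_add_tsum_nat_add N hfs]
  linarith
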